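/- arXiv:1009.5730 — 5 statements merged into one kernel-verified Lean document; each statement's English description precedes it below -/
import Mathlib

section
/- The Steiner matrix F is a tight frame: F·Fᴴ = k·(1 + (k−1)/(v−1))·I, where the identity matrix is indexed by 𝓑. In particular the rows of F are orthogonal and each has squared norm equal to the redundancy N/M = k(1 + (k−1)/(v−1)), with N = v(1 + (v−1)/(k−1)) and M = |𝓑| = v(v−1)/(k(k−1)). -/
open Matrix

/-- The Steiner matrix F built from a (2,k,v)-Steiner system and unimodular
matrices H_x with orthogonal rows is a tight frame:
F·Fᴴ = k·(1 + (k−1)/(v−1))·I, the identity being indexed by the blocks 𝓑. -/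
theorem steiner_matrix_tight {V : Type*} [Fintype V] [DecidableEq V] (k v r : ℕ)
    (hk : 2 ≤ k) (hkv : k < v) (hcard : Fintype.card V = v)
    (𝓑 : Finset (Finset V))
    (hsize : ∀ B ∈ 𝓑, B.card = k)
    (hpair : ∀ x y : V, x ≠ y → ∃! B, B ∈ 𝓑 ∧ x ∈ B ∧ y ∈ B)
    (hr : r * (k - 1) = v - 1)
    (H : V → Matrix (Fin (r + 1)) (Fin (r + 1)) ℂ)
    (hHuni : ∀ x i j, ‖H x i j‖ = 1)
    (hHorth : ∀ x, H x * (H x)ᴴ = ((r : ℂ) + 1) • 1)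
    (φ : V → Finset V → Fin (r + 1))
    (hφ : ∀ x : V, Set.InjOn (φ x) {B : Finset V | B ∈ 𝓑 ∧ x ∈ B})
    (F : Matrix (↥𝓑) (V × Fin (r + 1)) ℂ)
    (hF : ∀ (B : ↥𝓑) (p : V × Fin (r + 1)),
      F B p = if p.1 ∈ (B : Finset V)
        then (Real.sqrt (((k : ℝ) - 1) / ((v : ℝ) - 1)) : ℂ)
              * H p.1 (φ p.1 (B : Finset V)) p.2
        else 0) :
    F * Fᴴ = ((k : ℂ) * (1 + ((k : ℂ) - 1) / ((v : ℂ) - 1))) • 1 := by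
  have hk1 : 1 ≤ k := by omega
  have hv1 : 1 ≤ v := by omega
  have hvR : (0:ℝ) < (v:ℝ) - 1 := by
    have h2 : (2:ℝ) ≤ v := by exact_mod_cast (by omega : 2 ≤ v)
    linarith
  have hkR : (0:ℝ) ≤ (k:ℝ) - 1 := by
    have h1 : (1:ℝ) ≤ k := by exact_mod_cast hk1
    linarith
  set c : ℂ := (Real.sqrt (((k : ℝ) - 1) / ((v : ℝ) - 1)) : ℂ) with hcdef
  have hcc : c * c = ((k:ℂ)-1)/((v:ℂ)-1) := by
    rw [hcdef, ← Complex.ofReal_mul, Real.mul_self_sqrt (div_nonneg hkR hvR.le)]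
    push_cast
    ring
  have hcstar : star c = c := Complex.conj_ofReal _
  set d : ℂ := (((k:ℂ)-1)/((v:ℂ)-1)) * ((r:ℂ)+1) with hddef
  have key : ∀ (B B' : ↥𝓑) (x : V),
      (∑ i, F B (x, i) * star (F B' (x, i))) =
      if x ∈ (B:Finset V) ∧ x ∈ (B':Finset V)
        then d * (if φ x (B:Finset V) = φ x (B':Finset V) then 1 else 0)
        else 0 := by
    intro B B' x
    have hsum : (∑ i, H x (φ x (B:Finset V)) i * star (H x (φ x (B':Finset V)) i))
        = ((r:ℂ)+1) * (if φ x (B:Finset V) = φ x (B':Finset V) then 1 else 0) := by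
      have h := congrFun (congrFun (hHorth x) (φ x (B:Finset V))) (φ x (B':Finset V))
      simpa [Matrix.mul_apply, Matrix.conjTranspose_apply, Matrix.one_apply,
        Matrix.smul_apply, smul_eq_mul, mul_ite] using h
    by_cases hB : x ∈ (B:Finset V)
    · by_cases hB' : x ∈ (B':Finset V)
      · have hterm : ∀ i, F B (x,i) * star (F B' (x,i))
            = c * c * (H x (φ x (B:Finset V)) i * star (H x (φ x (B':Finset V)) i)) := by
          intro i
          rw [hF, hF]
          simp only [hB, hB', if_true]
          rw [StarMul.star_mul, hcstar]
          ring
        rw [if_pos ⟨hB, hB'⟩, Finset.sum_congr rfl (fun i _ => hterm i),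
          ← Finset.mul_sum, hsum, hcc, hddef]
        ring
      · simp [hF, hB, hB']
    · simp [hF, hB]
  ext B B'
  rw [Matrix.mul_apply]
  have hsplit : (∑ p : V × Fin (r+1), F B p * Fᴴ p B')
      = ∑ x : V, ∑ i : Fin (r+1), F B (x, i) * star (F B' (x, i)) := by
    rw [Fintype.sum_prod_type]
    rfl
  rw [hsplit]
  by_cases hBB : B = B'
  · subst hBB
    have : (∑ x : V, ∑ i : Fin (r+1), F B (x, i) * star (F B (x, i)))
        = ∑ x : V, if x ∈ (B:Finset V) then d else 0 := by
      refine Finset.sum_congr rfl fun x _ => ?_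
      rw [key B B x]
      by_cases hx : x ∈ (B:Finset V) <;> simp [hx]
    rw [this, Finset.sum_ite_mem, Finset.univ_inter, Finset.sum_const,
      hsize _ B.2, Matrix.smul_apply, Matrix.one_apply_eq, smul_eq_mul, mul_one,
      nsmul_eq_mul, hddef]
    have hrC : (r:ℂ) * ((k:ℂ) - 1) = (v:ℂ) - 1 := by
      have h := congrArg (Nat.cast (R := ℂ)) hr
      push_cast [Nat.cast_sub hk1, Nat.cast_sub hv1] at h
      exact h
    have hvC : ((v:ℂ) - 1) ≠ 0 := by
      intro h
      have : ((v:ℝ) - 1) = 0 := by exact_mod_cast congrArg Complex.re h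
      linarith
    have hmain : ((k:ℂ)-1)/((v:ℂ)-1) * ((r:ℂ)+1) = 1 + ((k:ℂ)-1)/((v:ℂ)-1) := by
      field_simp
      linear_combination hrC
    rw [hmain]
  · have hne : (B:Finset V) ≠ (B':Finset V) := fun h => hBB (Subtype.ext h)
    have : (∑ x : V, ∑ i : Fin (r+1), F B (x, i) * star (F B' (x, i))) = 0 := by
      refine Finset.sum_eq_zero fun x _ => ?_
      rw [key B B' x]
      by_cases hx : x ∈ (B:Finset V) ∧ x ∈ (B':Finset V)
      · have hφne : φ x (B:Finset V) ≠ φ x (B':Finset V) := fun h =>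
          hne (hφ x ⟨B.2, hx.1⟩ ⟨B'.2, hx.2⟩ h)
        simp [hx, hφne]
      · simp [hx]
    rw [this, Matrix.smul_apply, Matrix.one_apply_ne hBB, smul_zero]
end

section
/- The Steiner matrix F is equiangular: for any two distinct column indices (x,i) ≠ (x',i') in V × Fin(r+1), the inner product of the corresponding columns of F has modulus exactly (k−1)/(v−1), i.e., |Σ_{B ∈ 𝓑} conj(F(B,(x,i)))·F(B,(x',i'))| = (k−1)/(v−1). -/
open Matrix

private lemma conj_col_orth {n : ℕ} (H : Matrix (Fin n) (Fin n) ℂ) (c : ℂ) (hc : c ≠ 0)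
    (h : H * Hᴴ = c • 1) (i i' : Fin n) (hii : i ≠ i') :
    ∑ m, (starRingEnd ℂ) (H m i) * H m i' = 0 := by
  have h1 : H * (c⁻¹ • Hᴴ) = 1 := by
    rw [Matrix.mul_smul, h, smul_smul, inv_mul_cancel₀ hc, one_smul]
  have h3 : (c⁻¹ • Hᴴ) * H = 1 := mul_eq_one_comm.mp h1
  have h2 : Hᴴ * H = c • 1 := by
    calc Hᴴ * H = c • ((c⁻¹ • Hᴴ) * H) := by
          rw [Matrix.smul_mul, smul_smul, mul_inv_cancel₀ hc, one_smul]
      _ = c • 1 := by rw [h3]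
  have := congrFun (congrFun h2 i) i'
  simp only [Matrix.mul_apply, Matrix.conjTranspose_apply, Matrix.smul_apply,
    Matrix.one_apply_ne hii, smul_zero] at this
  simp only [starRingEnd_apply]
  exact this

/-- The Steiner matrix F is equiangular: the inner product of any two distinct
columns of F has modulus exactly (k−1)/(v−1). -/
theorem steiner_matrix_equiangular {V : Type*} [Fintype V] [DecidableEq V] (k v r : ℕ)
    (hk : 2 ≤ k) (hkv : k < v) (hcard : Fintype.card V = v)
    (𝓑 : Finset (Finset V))
    (hsize : ∀ B ∈ 𝓑, B.card = k)
    (hpair : ∀ x y : V, x ≠ y → ∃! B, B ∈ 𝓑 ∧ x ∈ B ∧ y ∈ B)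
    (hr : r * (k - 1) = v - 1)
    (H : V → Matrix (Fin (r + 1)) (Fin (r + 1)) ℂ)
    (hHuni : ∀ x i j, ‖H x i j‖ = 1)
    (hHorth : ∀ x, H x * (H x)ᴴ = ((r : ℂ) + 1) • 1)
    (φ : V → Finset V → Fin (r + 1))
    (hφ : ∀ x : V, Set.InjOn (φ x) {B : Finset V | B ∈ 𝓑 ∧ x ∈ B})
    (F : Matrix (↥𝓑) (V × Fin (r + 1)) ℂ)
    (hF : ∀ (B : ↥𝓑) (p : V × Fin (r + 1)),
      F B p = if p.1 ∈ (B : Finset V)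
        then (Real.sqrt (((k : ℝ) - 1) / ((v : ℝ) - 1)) : ℂ)
              * H p.1 (φ p.1 (B : Finset V)) p.2
        else 0) :
    ∀ p p' : V × Fin (r + 1), p ≠ p' →
      ‖∑ B : ↥𝓑, (starRingEnd ℂ) (F B p) * F B p'‖
        = ((k : ℝ) - 1) / ((v : ℝ) - 1) := by
  classical
  intro p p' hpp
  obtain ⟨x, i⟩ := p
  obtain ⟨x', i'⟩ := p'
  set cR : ℝ := Real.sqrt (((k:ℝ) - 1) / ((v:ℝ) - 1)) with hcRdef
  have hk2 : (2:ℝ) ≤ (k:ℝ) := by exact_mod_cast hk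
  have hv2 : (2:ℕ) < v := lt_of_le_of_lt hk hkv
  have hvR : (2:ℝ) < (v:ℝ) := by exact_mod_cast hv2
  have hknn : (0:ℝ) ≤ (k:ℝ) - 1 := by linarith
  have hvpos : (0:ℝ) < (v:ℝ) - 1 := by linarith
  have hq : (0:ℝ) ≤ ((k:ℝ) - 1) / ((v:ℝ) - 1) := div_nonneg hknn hvpos.le
  have hcc : cR * cR = ((k:ℝ) - 1) / ((v:ℝ) - 1) := Real.mul_self_sqrt hq
  have hcnn : 0 ≤ cR := Real.sqrt_nonneg _
  have hterm : ∀ B : ↥𝓑, (starRingEnd ℂ) (F B (x, i)) * F B (x', i')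
      = if x ∈ (B : Finset V) ∧ x' ∈ (B : Finset V) then
          (cR : ℂ) * (cR : ℂ) *
            ((starRingEnd ℂ) (H x (φ x B) i) * H x' (φ x' B) i')
        else 0 := by
    intro B
    rw [hF, hF]
    by_cases h1 : x ∈ (B : Finset V) <;> by_cases h2 : x' ∈ (B : Finset V) <;>
      simp [h1, h2, _root_.map_mul, Complex.conj_ofReal]
    ring
  simp only [hterm]
  by_cases hxx : x = x'
  · -- same point, different columns of H x
    subst hxx
    have hii : i ≠ i' := by
      intro h; exact hpp (by rw [h])
    simp only [and_self]
    set S : Finset ↥𝓑 := Finset.univ.filter (fun B => x ∈ (B : Finset V)) with hSdef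
    have hmemS : ∀ B : ↥𝓑, B ∈ S ↔ x ∈ (B : Finset V) := by
      intro B; simp [hSdef]
    -- card S = r
    have hcover : S.biUnion (fun B => (B : Finset V).erase x) = Finset.univ.erase x := by
      ext y
      simp only [Finset.mem_biUnion, Finset.mem_erase, Finset.mem_univ, and_true]
      constructor
      · rintro ⟨B, hBS, hy⟩
        exact hy.1
      · intro hy
        obtain ⟨B, ⟨hB𝓑, hxB, hyB⟩, -⟩ := hpair x y (Ne.symm hy)
        exact ⟨⟨B, hB𝓑⟩, (hmemS _).mpr hxB, ⟨hy, hyB⟩⟩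
    have hdisj : ∀ B ∈ S, ∀ B' ∈ S, B ≠ B' →
        Disjoint ((B : Finset V).erase x) ((B' : Finset V).erase x) := by
      intro B hB B' hB' hne
      rw [Finset.disjoint_left]
      intro y hy hy'
      obtain ⟨hyx, hyB⟩ := Finset.mem_erase.mp hy
      obtain ⟨-, hyB'⟩ := Finset.mem_erase.mp hy'
      obtain ⟨C, -, huniq⟩ := hpair x y (Ne.symm hyx)
      have e1 : (B : Finset V) = C := huniq _ ⟨B.2, (hmemS _).mp hB, hyB⟩
      have e2 : (B' : Finset V) = C := huniq _ ⟨B'.2, (hmemS _).mp hB', hyB'⟩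
      exact hne (Subtype.ext (e1.trans e2.symm))
    have hcardsum : ∑ B ∈ S, ((B : Finset V).erase x).card = v - 1 := by
      rw [← Finset.card_biUnion hdisj, hcover, Finset.card_erase_of_mem (Finset.mem_univ x),
        Finset.card_univ, hcard]
    have hcardS : S.card = r := by
      have h1 : ∀ B ∈ S, ((B : Finset V).erase x).card = k - 1 := by
        intro B hB
        rw [Finset.card_erase_of_mem ((hmemS _).mp hB), hsize _ B.2]
      rw [Finset.sum_congr rfl h1, Finset.sum_const, smul_eq_mul, ← hr] at hcardsum
      have hk1 : 0 < k - 1 := by omega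
      exact Nat.eq_of_mul_eq_mul_right hk1 hcardsum
    -- reduce sum to sum over image of φ
    set g : Fin (r + 1) → ℂ := fun m => (starRingEnd ℂ) (H x m i) * H x m i' with hgdef
    have habs_g : ∀ m, ‖g m‖ = 1 := by
      intro m
      simp [hgdef, norm_mul, Complex.norm_conj, hHuni]
    set ψ : ↥𝓑 → Fin (r + 1) := fun B => φ x (B : Finset V) with hψdef
    have hψinj : ∀ B ∈ S, ∀ B' ∈ S, ψ B = ψ B' → B = B' := by
      intro B hB B' hB' he
      exact Subtype.ext (hφ x ⟨B.2, (hmemS _).mp hB⟩ ⟨B'.2, (hmemS _).mp hB'⟩ he)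
    have hstep1 : (∑ B : ↥𝓑, if x ∈ (B : Finset V) then
          (cR : ℂ) * (cR : ℂ) * ((starRingEnd ℂ) (H x (φ x B) i) * H x (φ x B) i') else 0)
        = (cR : ℂ) * (cR : ℂ) * ∑ B ∈ S, g (ψ B) := by
      rw [Finset.mul_sum, hSdef, Finset.sum_filter]
    rw [hstep1]
    set T : Finset (Fin (r + 1)) := S.image ψ with hTdef
    have hsum_image : ∑ B ∈ S, g (ψ B) = ∑ m ∈ T, g m := (Finset.sum_image hψinj).symm
    have hcardT : T.card = r := by
      rw [hTdef, Finset.card_image_of_injOn hψinj, hcardS]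
    have hcardcompl : ((Finset.univ : Finset (Fin (r + 1))) \ T).card = 1 := by
      rw [Finset.card_sdiff_of_subset (Finset.subset_univ T), Finset.card_univ, Fintype.card_fin, hcardT]
      omega
    obtain ⟨m₀, hm₀⟩ := Finset.card_eq_one.mp hcardcompl
    have horth : ∑ m, g m = 0 := by
      have hne : ((r : ℂ) + 1) ≠ 0 := by
        have : ((r : ℂ) + 1) = ((r + 1 : ℕ) : ℂ) := by push_cast; ring
        rw [this, Nat.cast_ne_zero]
        omega
      exact conj_col_orth (H x) _ hne (hHorth x) i i' hii
    have hsplit : ∑ m ∈ T, g m = - g m₀ := by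
      have := Finset.sum_sdiff (Finset.subset_univ T) (f := g)
      rw [hm₀, Finset.sum_singleton] at this
      have h0 : g m₀ + ∑ m ∈ T, g m = 0 := by rw [this]; exact horth
      linear_combination h0
    rw [hsum_image, hsplit]
    simp only [norm_mul, norm_neg, habs_g, Complex.norm_real, Real.norm_eq_abs,
      abs_of_nonneg hcnn, mul_one]
    exact hcc
  · -- distinct points: unique block through x, x'
    obtain ⟨B₀, ⟨hB₀, hxB₀, hx'B₀⟩, huniq⟩ := hpair x x' hxx
    have hsum : (∑ B : ↥𝓑, if x ∈ (B : Finset V) ∧ x' ∈ (B : Finset V) then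
          (cR : ℂ) * (cR : ℂ) *
            ((starRingEnd ℂ) (H x (φ x B) i) * H x' (φ x' B) i') else 0)
        = (cR : ℂ) * (cR : ℂ) *
            ((starRingEnd ℂ) (H x (φ x B₀) i) * H x' (φ x' B₀) i') := by
      rw [Finset.sum_eq_single_of_mem (⟨B₀, hB₀⟩ : ↥𝓑) (Finset.mem_univ _)]
      · simp [hxB₀, hx'B₀]
      · intro b _ hb
        rw [if_neg]
        rintro ⟨h1, h2⟩
        exact hb (Subtype.ext (huniq (b : Finset V) ⟨b.2, h1, h2⟩))
    rw [hsum]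
    simp only [norm_mul, Complex.norm_conj, hHuni, Complex.norm_real, Real.norm_eq_abs,
      abs_of_nonneg hcnn, mul_one]
    exact hcc
end

section
/- Let F be an M×N complex matrix whose columns f_1,…,f_N are unit vectors satisfying |⟨f_n, f_{n'}⟩| ≤ μ for all n ≠ n'. Then for every subset 𝒦 of column indices with |𝒦| = K ≥ 1, every eigenvalue λ of the Hermitian matrix (F_𝒦)ᴴ·F_𝒦 (where F_𝒦 is the submatrix of F with columns indexed by 𝒦) satisfies |λ − 1| ≤ (K−1)·μ. Consequently, if (K−1)·μ ≤ δ, then F has the (K,δ)-restricted isometry property. -/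
open Matrix

/-- An `M × N` complex matrix `F` has the `(K,δ)`-restricted isometry property if
`(1−δ)‖g‖² ≤ ‖F·g‖² ≤ (1+δ)‖g‖²` for every vector `g` with at most `K` nonzero
entries. -/
def HasRIP {m n : Type*} [Fintype m] [Fintype n] (F : Matrix m n ℂ)
    (K : ℕ) (δ : ℝ) : Prop :=
  ∀ g : n → ℂ, (∃ s : Finset n, s.card ≤ K ∧ ∀ j ∉ s, g j = 0) →
    (1 - δ) * ∑ j, ‖g j‖ ^ 2 ≤ ∑ i, ‖F.mulVec g i‖ ^ 2 ∧
    ∑ i, ‖F.mulVec g i‖ ^ 2 ≤ (1 + δ) * ∑ j, ‖g j‖ ^ 2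

/-- If the columns f₁,…,f_N of F are unit vectors with worst-case coherence at
most μ, then for every K-element set 𝒦 of columns every eigenvalue λ of
(F_𝒦)ᴴ·F_𝒦 satisfies |λ − 1| ≤ (K−1)μ (Gershgorin); consequently, if
(K−1)μ ≤ δ then F has the (K,δ)-restricted isometry property. -/
theorem coherence_implies_rip (M N K : ℕ) (hK : 1 ≤ K)
    (μ : ℝ) (hμ : 0 ≤ μ)
    (F : Matrix (Fin M) (Fin N) ℂ)
    (hcol : ∀ n, ∑ m, ‖F m n‖ ^ 2 = 1)
    (hcoh : ∀ n n', n ≠ n' →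
      ‖∑ m, (starRingEnd ℂ) (F m n) * F m n'‖ ≤ μ) :
    (∀ 𝒦 : Finset (Fin N), 𝒦.card = K →
      ∀ lam : ℝ,
        (lam : ℂ) ∈ spectrum ℂ
          ((F.submatrix id (fun i : ↥𝒦 => (i : Fin N)))ᴴ
            * F.submatrix id (fun i : ↥𝒦 => (i : Fin N))) →
        |lam - 1| ≤ ((K : ℝ) - 1) * μ) ∧
    ∀ δ : ℝ, ((K : ℝ) - 1) * μ ≤ δ → HasRIP F K δ := by
  -- Gram diagonal entries are 1
  have hT : ∀ n : Fin N, (∑ m, (starRingEnd ℂ) (F m n) * F m n) = 1 := by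
    intro n
    have h : ∀ m, (starRingEnd ℂ) (F m n) * F m n = ((‖F m n‖ ^ 2 : ℝ) : ℂ) := by
      intro m
      rw [Complex.conj_mul']
      norm_cast
    simp_rw [h]
    rw [← Complex.ofReal_sum, hcol n, Complex.ofReal_one]
  constructor
  · -- Gershgorin part
    intro 𝒦 h𝒦 lam hmem
    set G := F.submatrix id (fun i : ↥𝒦 => (i : Fin N)) with hG
    have heig : Module.End.HasEigenvalue (Matrix.toLin' (Gᴴ * G)) (lam : ℂ) := by
      apply Module.End.HasEigenvalue.of_mem_spectrum
      rwa [show Matrix.toLin' (Gᴴ * G) = Matrix.toLinAlgEquiv' (Gᴴ * G) from rfl,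
        AlgEquiv.spectrum_eq]
    obtain ⟨k, hk⟩ := eigenvalue_mem_ball heig
    have hdiag : (Gᴴ * G) k k = 1 := by
      simp only [Matrix.mul_apply, Matrix.conjTranspose_apply, hG, Matrix.submatrix_apply,
        id_eq, RCLike.star_def]
      exact hT _
    have hoff : ∀ j ∈ Finset.univ.erase k, ‖(Gᴴ * G) k j‖ ≤ μ := by
      intro j hj
      have hjk : (k : Fin N) ≠ (j : Fin N) := by
        intro h
        exact (Finset.mem_erase.mp hj).1 (Subtype.ext h.symm)
      simp only [Matrix.mul_apply, Matrix.conjTranspose_apply, hG, Matrix.submatrix_apply,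
        id_eq, RCLike.star_def]
      exact hcoh _ _ hjk
    rw [Metric.mem_closedBall, hdiag] at hk
    have hdist : |lam - 1| = dist ((lam : ℂ)) 1 := by
      rw [Complex.dist_eq, show (lam : ℂ) - 1 = ((lam - 1 : ℝ) : ℂ) by push_cast; ring,
        Complex.norm_real, Real.norm_eq_abs]
    rw [hdist]
    refine hk.trans ?_
    calc ∑ j ∈ Finset.univ.erase k, ‖(Gᴴ * G) k j‖
        ≤ ∑ _j ∈ Finset.univ.erase k, μ := Finset.sum_le_sum hoff
      _ = ((Finset.univ.erase k).card : ℝ) * μ := by rw [Finset.sum_const, nsmul_eq_mul]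
      _ = ((K : ℝ) - 1) * μ := by
          rw [Finset.card_erase_of_mem (Finset.mem_univ k), Finset.card_univ,
            Fintype.card_coe, h𝒦]
          rw [Nat.cast_sub hK]
          norm_num
  · -- RIP part
    intro δ hδ g ⟨s, hs, hg⟩
    have hK1 : (1 : ℝ) ≤ (K : ℝ) := by exact_mod_cast hK
    set Sg : ℝ := ∑ j ∈ s, ‖g j‖ ^ 2 with hSg
    have hStot : ∑ j, ‖g j‖ ^ 2 = Sg := by
      rw [hSg]
      exact (Finset.sum_subset (Finset.subset_univ s) (fun j _ hj => by
        rw [hg j hj]; simp)).symm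
    have hSnn : 0 ≤ Sg := Finset.sum_nonneg fun j _ => by positivity
    set T : Fin N → Fin N → ℂ := fun n n' => ∑ i, (starRingEnd ℂ) (F i n) * F i n' with hTd
    have key : (∑ i, ‖F.mulVec g i‖ ^ 2 : ℝ) =
        (∑ n ∈ s, ∑ n' ∈ s, (starRingEnd ℂ) (g n) * g n' * T n n').re := by
      have h1 : (∑ i, ‖F.mulVec g i‖ ^ 2 : ℝ) =
          (∑ i, (starRingEnd ℂ) (F.mulVec g i) * F.mulVec g i).re := by
        rw [Complex.re_sum]
        refine Finset.sum_congr rfl fun i _ => ?_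
        rw [Complex.conj_mul']
        norm_cast
      rw [h1]
      congr 1
      calc ∑ i, (starRingEnd ℂ) (F.mulVec g i) * F.mulVec g i
          = ∑ i, ∑ n, ∑ n', ((starRingEnd ℂ) (F i n) * (starRingEnd ℂ) (g n)) *
              (F i n' * g n') := by
            refine Finset.sum_congr rfl fun i _ => ?_
            simp only [Matrix.mulVec, dotProduct, map_sum, _root_.map_mul,
              Finset.sum_mul, Finset.mul_sum]
            rw [Finset.sum_comm]
        _ = ∑ n, ∑ n', (starRingEnd ℂ) (g n) * g n' * T n n' := by
            rw [Finset.sum_comm]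
            refine Finset.sum_congr rfl fun n _ => ?_
            rw [Finset.sum_comm]
            refine Finset.sum_congr rfl fun n' _ => ?_
            rw [hTd]
            simp only [Finset.mul_sum]
            refine Finset.sum_congr rfl fun i _ => ?_
            ring
        _ = ∑ n ∈ s, ∑ n' ∈ s, (starRingEnd ℂ) (g n) * g n' * T n n' := by
            rw [← Finset.sum_subset (Finset.subset_univ s) (fun n _ hn => by
              refine Finset.sum_eq_zero fun n' _ => ?_
              rw [hg n hn]
              simp)]
            refine Finset.sum_congr rfl fun n _ => ?_
            exact (Finset.sum_subset (Finset.subset_univ s) (fun n' _ hn' => by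
              rw [hg n' hn']; simp)).symm
    set E : ℂ := ∑ n ∈ s, ∑ n' ∈ s.erase n, (starRingEnd ℂ) (g n) * g n' * T n n' with hE
    have split : (∑ n ∈ s, ∑ n' ∈ s, (starRingEnd ℂ) (g n) * g n' * T n n') =
        (Sg : ℂ) + E := by
      rw [hE, hSg]
      push_cast
      rw [← Finset.sum_add_distrib]
      refine Finset.sum_congr rfl fun n hn => ?_
      rw [← Finset.add_sum_erase _ _ hn]
      congr 1
      rw [show T n n = 1 from hT n, mul_one, Complex.conj_mul']
    -- bound the off-diagonal error
    have hEbound : ‖E‖ ≤ ((K : ℝ) - 1) * μ * Sg := by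
      have h1 : ‖E‖ ≤ ∑ n ∈ s, ∑ n' ∈ s.erase n, ‖g n‖ * ‖g n'‖ * μ := by
        refine (norm_sum_le _ _).trans (Finset.sum_le_sum fun n hn => ?_)
        refine (norm_sum_le _ _).trans (Finset.sum_le_sum fun n' hn' => ?_)
        rw [norm_mul, norm_mul, RCLike.norm_conj]
        have hne : n ≠ n' := fun h => (Finset.mem_erase.mp hn').1 h.symm
        have hTle : ‖T n n'‖ ≤ μ := by
          simpa [hTd] using hcoh n n' hne
        have hgn : (0:ℝ) ≤ ‖g n‖ * ‖g n'‖ := by positivity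
        exact mul_le_mul_of_nonneg_left hTle hgn
      refine h1.trans ?_
      have h2 : ∑ n ∈ s, ∑ n' ∈ s.erase n, ‖g n‖ * ‖g n'‖ * μ =
          μ * ((∑ n ∈ s, ‖g n‖) ^ 2 - Sg) := by
        have : ∀ n ∈ s, ∑ n' ∈ s.erase n, ‖g n‖ * ‖g n'‖ * μ =
            μ * (‖g n‖ * ((∑ n' ∈ s, ‖g n'‖) - ‖g n‖)) := by
          intro n hn
          rw [← Finset.sum_erase_eq_sub hn, Finset.mul_sum, Finset.mul_sum]
          refine Finset.sum_congr rfl fun n' _ => ?_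
          ring
        rw [Finset.sum_congr rfl this, ← Finset.mul_sum]
        congr 1
        rw [hSg, sq, Finset.sum_mul]
        rw [← Finset.sum_sub_distrib]
        refine Finset.sum_congr rfl fun n _ => ?_
        ring
      rw [h2]
      have h3 : (∑ n ∈ s, ‖g n‖) ^ 2 ≤ (s.card : ℝ) * Sg := by
        have := sq_sum_le_card_mul_sum_sq (s := s) (f := fun n => ‖g n‖)
        rwa [hSg]
      have h4 : (∑ n ∈ s, ‖g n‖) ^ 2 - Sg ≤ ((K : ℝ) - 1) * Sg := by
        have hcard : (s.card : ℝ) ≤ (K : ℝ) := by exact_mod_cast hs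
        nlinarith
      calc μ * ((∑ n ∈ s, ‖g n‖) ^ 2 - Sg) ≤ μ * (((K : ℝ) - 1) * Sg) :=
            mul_le_mul_of_nonneg_left h4 hμ
        _ = ((K : ℝ) - 1) * μ * Sg := by ring
    have hEre : |E.re| ≤ δ * Sg := by
      refine (Complex.abs_re_le_norm E).trans (hEbound.trans ?_)
      exact mul_le_mul_of_nonneg_right hδ hSnn
    have hfinal : (∑ i, ‖F.mulVec g i‖ ^ 2 : ℝ) = Sg + E.re := by
      rw [key, split, Complex.add_re, Complex.ofReal_re]
    rw [hStot, hfinal]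
    rw [abs_le] at hEre
    constructor <;> nlinarith [hEre.1, hEre.2]
end

section
/- Fix 0 ≤ δ < 1 and let f_1,…,f_N be an equiangular tight frame in ℂ^M with M < N: each ‖f_n‖ = 1, |⟨f_n, f_{n'}⟩| = ((N−M)/(M(N−1)))^{1/2} for all n ≠ n', and the matrix F with columns f_n satisfies F·Fᴴ = (N/M)·I. Then F has the (K,δ)-restricted isometry property for every positive integer K with K ≤ 1 + δ·(M(N−1)/(N−M))^{1/2}. -/
open Matrix

lemma etf_conj_mul_self (z : ℂ) : (starRingEnd ℂ) z * z = ((‖z‖ ^ 2 : ℝ) : ℂ) := by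
  rw [mul_comm, Complex.mul_conj, Complex.normSq_eq_norm_sq]

/-- Fix 0 ≤ δ < 1 and let f₁,…,f_N be an equiangular tight frame in ℂ^M with
M < N: unit norms, |⟨fₙ, fₙ'⟩| = ((N−M)/(M(N−1)))^(1/2) for n ≠ n', and
F·Fᴴ = (N/M)·I.  Then F has the (K,δ)-restricted isometry property for every
positive integer K with K ≤ 1 + δ·(M(N−1)/(N−M))^(1/2). -/
theorem etf_rip_range (M N : ℕ) (hMN : M < N)
    (δ : ℝ) (hδ0 : 0 ≤ δ) (hδ1 : δ < 1)
    (F : Matrix (Fin M) (Fin N) ℂ)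
    (hcol : ∀ n, ∑ m, ‖F m n‖ ^ 2 = 1)
    (hang : ∀ n n', n ≠ n' →
      ‖∑ m, (starRingEnd ℂ) (F m n) * F m n'‖
        = Real.sqrt (((N : ℝ) - M) / (M * ((N : ℝ) - 1))))
    (htight : F * Fᴴ = (((N : ℝ) / M : ℝ) : ℂ) • 1) :
    ∀ K : ℕ, 1 ≤ K →
      (K : ℝ) ≤ 1 + δ * Real.sqrt ((M * ((N : ℝ) - 1)) / ((N : ℝ) - M)) →
      HasRIP F K δ := by
  have hN1 : 0 < N := by omega
  have hM1 : 0 < M := by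
    rcases Nat.eq_zero_or_pos M with h | h
    · exfalso
      have := hcol ⟨0, hN1⟩
      subst h
      simp at this
    · exact h
  have hN2 : 2 ≤ N := by omega
  set α : ℝ := Real.sqrt (((N : ℝ) - M) / (M * ((N : ℝ) - 1))) with hα
  have hNM : (0:ℝ) < (N:ℝ) - M := by
    have : (M:ℝ) < N := by exact_mod_cast hMN
    linarith
  have hMN1 : (0:ℝ) < (M:ℝ) * ((N:ℝ) - 1) := by
    have h1 : (1:ℝ) ≤ M := by exact_mod_cast hM1
    have h2 : (2:ℝ) ≤ N := by exact_mod_cast hN2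
    nlinarith
  have hαpos : 0 < α := Real.sqrt_pos.2 (div_pos hNM hMN1)
  have hαmul : α * Real.sqrt ((M * ((N : ℝ) - 1)) / ((N : ℝ) - M)) = 1 := by
    rw [hα, ← Real.sqrt_mul (le_of_lt (div_pos hNM hMN1))]
    rw [show (((N : ℝ) - M) / (M * ((N : ℝ) - 1))) * ((M * ((N : ℝ) - 1)) / ((N : ℝ) - M)) = 1 by
      have hN1' : (N:ℝ) - 1 ≠ 0 := by
        have : (2:ℝ) ≤ N := by exact_mod_cast hN2
        linarith
      field_simp]
    exact Real.sqrt_one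
  intro K hK1 hK2 g ⟨s, hsK, hs0⟩
  have hgram : ∀ j, (∑ i, (starRingEnd ℂ) (F i j) * F i j) = 1 := by
    intro j
    have h : (∑ i, (starRingEnd ℂ) (F i j) * F i j) = ((∑ i, ‖F i j‖ ^ 2 : ℝ) : ℂ) := by
      rw [Complex.ofReal_sum]
      exact Finset.sum_congr rfl fun i _ => etf_conj_mul_self _
    rw [h, hcol j]
    norm_num
  have hFg : ∀ i, F.mulVec g i = ∑ j ∈ s, F i j * g j := by
    intro i
    rw [mulVec, dotProduct]
    refine (Finset.sum_subset (Finset.subset_univ s) ?_).symm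
    intro j _ hj
    rw [hs0 j hj, mul_zero]
  set E : Fin N → Fin N → ℂ := fun j j' => ∑ i, (starRingEnd ℂ) (F i j) * F i j' with hE
  have key : (∑ i, ‖F.mulVec g i‖ ^ 2)
      = (∑ j ∈ s, ∑ j' ∈ s, (starRingEnd ℂ) (g j) * g j' * E j j').re := by
    have h1 : (∑ i, ‖F.mulVec g i‖ ^ 2)
        = (∑ i, (starRingEnd ℂ) (F.mulVec g i) * F.mulVec g i).re := by
      rw [Complex.re_sum]
      refine Finset.sum_congr rfl fun i _ => ?_
      rw [etf_conj_mul_self, Complex.ofReal_re]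
    rw [h1]
    congr 1
    calc (∑ i, (starRingEnd ℂ) (F.mulVec g i) * F.mulVec g i)
        = ∑ i, ∑ j ∈ s, ∑ j' ∈ s,
            ((starRingEnd ℂ) (g j) * g j') * ((starRingEnd ℂ) (F i j) * F i j') := by
          refine Finset.sum_congr rfl fun i _ => ?_
          rw [hFg, map_sum, Finset.sum_mul_sum]
          refine Finset.sum_congr rfl fun j _ => Finset.sum_congr rfl fun j' _ => ?_
          rw [RingHom.map_mul]
          ring
      _ = ∑ j ∈ s, ∑ j' ∈ s, ∑ i,
            ((starRingEnd ℂ) (g j) * g j') * ((starRingEnd ℂ) (F i j) * F i j') := by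
          rw [Finset.sum_comm]
          exact Finset.sum_congr rfl fun j _ => Finset.sum_comm
      _ = ∑ j ∈ s, ∑ j' ∈ s, (starRingEnd ℂ) (g j) * g j' * E j j' := by
          refine Finset.sum_congr rfl fun j _ => Finset.sum_congr rfl fun j' _ => ?_
          rw [hE, Finset.mul_sum]
  set T : ℝ := ∑ j, ‖g j‖ ^ 2 with hT
  have hTs : T = ∑ j ∈ s, ‖g j‖ ^ 2 := by
    rw [hT]
    refine (Finset.sum_subset (Finset.subset_univ s) ?_).symm
    intro j _ hj
    rw [hs0 j hj]
    simp
  have hT0 : 0 ≤ T := by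
    rw [hT]; positivity
  have hsplit : (∑ j ∈ s, ∑ j' ∈ s, (starRingEnd ℂ) (g j) * g j' * E j j')
      = (T : ℂ) + ∑ j ∈ s, ∑ j' ∈ s.erase j, (starRingEnd ℂ) (g j) * g j' * E j j' := by
    have hrow : ∀ j ∈ s, (∑ j' ∈ s, (starRingEnd ℂ) (g j) * g j' * E j j')
        = ((‖g j‖ ^ 2 : ℝ) : ℂ) + ∑ j' ∈ s.erase j, (starRingEnd ℂ) (g j) * g j' * E j j' := by
      intro j hj
      rw [← Finset.sum_erase_add _ _ hj, add_comm]
      congr 1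
      have hEjj : E j j = 1 := hgram j
      rw [hEjj, mul_one, etf_conj_mul_self]
    rw [Finset.sum_congr rfl hrow, Finset.sum_add_distrib]
    congr 1
    rw [hTs]
    push_cast
    rfl
  set Off : ℂ := ∑ j ∈ s, ∑ j' ∈ s.erase j, (starRingEnd ℂ) (g j) * g j' * E j j' with hOff
  have hCS : (∑ j ∈ s, ‖g j‖) ^ 2 ≤ (s.card : ℝ) * ∑ j ∈ s, ‖g j‖ ^ 2 :=
    sq_sum_le_card_mul_sum_sq
  have hOffBound : ‖Off‖ ≤ α * (((s.card : ℝ) - 1) * T) := by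
    calc ‖Off‖
        ≤ ∑ j ∈ s, ‖∑ j' ∈ s.erase j, (starRingEnd ℂ) (g j) * g j' * E j j'‖ :=
          norm_sum_le _ _
      _ ≤ ∑ j ∈ s, ∑ j' ∈ s.erase j, ‖(starRingEnd ℂ) (g j) * g j' * E j j'‖ :=
          Finset.sum_le_sum fun j _ => norm_sum_le _ _
      _ = ∑ j ∈ s, ∑ j' ∈ s.erase j, ‖g j‖ * ‖g j'‖ * α := by
          refine Finset.sum_congr rfl fun j _ => Finset.sum_congr rfl fun j' hj' => ?_
          have hne : j ≠ j' := fun h => (Finset.ne_of_mem_erase hj') h.symm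
          have habs : ‖E j j'‖ = α := hang j j' hne
          rw [norm_mul, norm_mul, Complex.norm_conj, habs]
      _ = α * ∑ j ∈ s, ‖g j‖ * ∑ j' ∈ s.erase j, ‖g j'‖ := by
          rw [Finset.mul_sum]
          refine Finset.sum_congr rfl fun j _ => ?_
          rw [Finset.mul_sum, Finset.mul_sum]
          exact Finset.sum_congr rfl fun j' _ => by ring
      _ ≤ α * (((s.card : ℝ) - 1) * T) := by
          refine mul_le_mul_of_nonneg_left ?_ (le_of_lt hαpos)
          have h1 : ∀ j ∈ s, ‖g j‖ * ∑ j' ∈ s.erase j, ‖g j'‖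
              = ‖g j‖ * ((∑ j' ∈ s, ‖g j'‖) - ‖g j‖) := fun j hj => by
            rw [Finset.sum_erase_eq_sub hj]
          rw [Finset.sum_congr rfl h1]
          have h2 : (∑ j ∈ s, ‖g j‖ * ((∑ j' ∈ s, ‖g j'‖) - ‖g j‖))
              = (∑ j ∈ s, ‖g j‖) ^ 2 - ∑ j ∈ s, ‖g j‖ ^ 2 := by
            simp only [mul_sub, pow_two]
            rw [Finset.sum_sub_distrib, ← Finset.sum_mul]
          rw [h2, hTs]
          linarith [hCS]
  have hcard : ((s.card : ℝ) - 1) ≤ (K : ℝ) - 1 := by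
    have : (s.card : ℝ) ≤ (K : ℝ) := by exact_mod_cast hsK
    linarith
  have hKα : α * ((K : ℝ) - 1) ≤ δ := by
    have h1 : (K : ℝ) - 1 ≤ δ * Real.sqrt ((M * ((N : ℝ) - 1)) / ((N : ℝ) - M)) := by
      linarith
    calc α * ((K : ℝ) - 1)
        ≤ α * (δ * Real.sqrt ((M * ((N : ℝ) - 1)) / ((N : ℝ) - M))) := by
          refine mul_le_mul_of_nonneg_left h1 (le_of_lt hαpos)
      _ = δ * (α * Real.sqrt ((M * ((N : ℝ) - 1)) / ((N : ℝ) - M))) := by ring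
      _ = δ := by rw [hαmul, mul_one]
  have hOffRe : |Off.re| ≤ δ * T := by
    have h1 : |Off.re| ≤ ‖Off‖ := Complex.abs_re_le_norm Off
    have hK1' : (1 : ℝ) ≤ K := by exact_mod_cast hK1
    have h2 : α * (((s.card : ℝ) - 1) * T) ≤ δ * T := by
      have : α * (((s.card : ℝ) - 1) * T) ≤ α * (((K : ℝ) - 1) * T) := by
        refine mul_le_mul_of_nonneg_left ?_ (le_of_lt hαpos)
        exact mul_le_mul_of_nonneg_right hcard hT0
      calc α * (((s.card : ℝ) - 1) * T) ≤ α * (((K : ℝ) - 1) * T) := this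
        _ = (α * ((K : ℝ) - 1)) * T := by ring
        _ ≤ δ * T := mul_le_mul_of_nonneg_right hKα hT0
    linarith
  have hfinal : (∑ i, ‖F.mulVec g i‖ ^ 2) = T + Off.re := by
    rw [key, hsplit, Complex.add_re, Complex.ofReal_re]
  rw [hfinal]
  have := abs_le.1 hOffRe
  constructor <;> [linarith [this.1]; linarith [this.2]]
end

section
/- For each fixed x ∈ V, the r+1 columns of the Steiner matrix F indexed by {(x,i) : i ∈ Fin(r+1)} are linearly dependent. Consequently, there exists a nonzero vector g ∈ ℂ^{V × Fin(r+1)} with at most r+1 nonzero entries such that F·g = 0, so F does not have the (K,δ)-restricted isometry property for K = r+1 and any δ < 1; that is, the restricted isometry behavior of Steiner equiangular tight frames is no better than the worst-case-coherence bound indicates. -/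
open Matrix

/-- For each fixed x ∈ V, the r+1 columns of the Steiner matrix F indexed by
{(x,i) : i ∈ Fin (r+1)} are linearly dependent.  Consequently, there is a nonzero
vector g with at most r+1 nonzero entries such that F·g = 0, so F fails the
(r+1, δ)-restricted isometry property for every δ < 1: the RIP behavior of
Steiner equiangular tight frames is no better than the coherence bound indicates. -/
theorem steiner_matrix_not_RIP {V : Type*} [Fintype V] [DecidableEq V] (k v r : ℕ)
    (hk : 2 ≤ k) (hkv : k < v) (hcard : Fintype.card V = v)
    (𝓑 : Finset (Finset V))
    (hsize : ∀ B ∈ 𝓑, B.card = k)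
    (hpair : ∀ x y : V, x ≠ y → ∃! B, B ∈ 𝓑 ∧ x ∈ B ∧ y ∈ B)
    (hr : r * (k - 1) = v - 1)
    (H : V → Matrix (Fin (r + 1)) (Fin (r + 1)) ℂ)
    (hHuni : ∀ x i j, ‖H x i j‖ = 1)
    (hHorth : ∀ x, H x * (H x)ᴴ = ((r : ℂ) + 1) • 1)
    (φ : V → Finset V → Fin (r + 1))
    (hφ : ∀ x : V, Set.InjOn (φ x) {B : Finset V | B ∈ 𝓑 ∧ x ∈ B})
    (F : Matrix (↥𝓑) (V × Fin (r + 1)) ℂ)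
    (hF : ∀ (B : ↥𝓑) (p : V × Fin (r + 1)),
      F B p = if p.1 ∈ (B : Finset V)
        then (Real.sqrt (((k : ℝ) - 1) / ((v : ℝ) - 1)) : ℂ)
              * H p.1 (φ p.1 (B : Finset V)) p.2
        else 0) :
    (∀ x : V,
      ¬ LinearIndependent ℂ (fun i : Fin (r + 1) => fun B : ↥𝓑 => F B (x, i))) ∧
    (∃ g : V × Fin (r + 1) → ℂ, g ≠ 0 ∧
      (∃ s : Finset (V × Fin (r + 1)), s.card ≤ r + 1 ∧ ∀ p ∉ s, g p = 0) ∧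
      F.mulVec g = 0) ∧
    ∀ δ : ℝ, δ < 1 → ¬ HasRIP F (r + 1) δ := by
  
  have hk1 : 0 < k - 1 := by omega
  -- Key lemma: for each x there is a coefficient vector c, all of whose entries are
  -- nonzero, killing all the columns (x,i).
  have key : ∀ x : V, ∃ c : Fin (r + 1) → ℂ, (∀ i, c i ≠ 0) ∧
      ∀ B : ↥𝓑, ∑ i, c i * F B (x, i) = 0 := by
    intro x
    classical
    set S : Finset (Finset V) := 𝓑.filter (fun B => x ∈ B) with hSdef
    have hmemS : ∀ B, B ∈ S ↔ B ∈ 𝓑 ∧ x ∈ B := by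
      intro B; simp [hSdef]
    -- the blocks through x partition V \ {x}
    have hdisj : ∀ B₁ ∈ S, ∀ B₂ ∈ S, B₁ ≠ B₂ →
        Disjoint (B₁.erase x) (B₂.erase x) := by
      intro B₁ hB₁ B₂ hB₂ hne
      rw [Finset.disjoint_left]
      intro y hy₁ hy₂
      rw [hmemS] at hB₁ hB₂
      have hyx : y ≠ x := Finset.ne_of_mem_erase hy₁
      obtain ⟨Bu, _, hu⟩ := hpair x y (Ne.symm hyx)
      have e1 : B₁ = Bu := hu B₁ ⟨hB₁.1, hB₁.2, Finset.mem_of_mem_erase hy₁⟩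
      have e2 : B₂ = Bu := hu B₂ ⟨hB₂.1, hB₂.2, Finset.mem_of_mem_erase hy₂⟩
      exact hne (e1.trans e2.symm)
    have hcover : S.biUnion (fun B => B.erase x) = Finset.univ.erase x := by
      apply Finset.ext
      intro y
      simp only [Finset.mem_biUnion, Finset.mem_erase, Finset.mem_univ, and_true]
      constructor
      · rintro ⟨B, hB, hy⟩
        exact hy.1
      · intro hy
        obtain ⟨B, ⟨hB𝓑, hxB, hyB⟩, _⟩ := hpair x y (Ne.symm hy)
        exact ⟨B, (hmemS B).2 ⟨hB𝓑, hxB⟩, hy, hyB⟩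
    have hScard : S.card = r := by
      have h1 : (S.biUnion fun B => B.erase x).card = ∑ B ∈ S, (B.erase x).card :=
        Finset.card_biUnion hdisj
      have h2 : ∑ B ∈ S, (B.erase x).card = S.card * (k - 1) := by
        rw [Finset.sum_congr rfl (fun B hB => ?_), Finset.sum_const, smul_eq_mul]
        rw [Finset.card_erase_of_mem ((hmemS B).1 hB).2, hsize B ((hmemS B).1 hB).1]
      have h3 : (Finset.univ.erase x).card = v - 1 := by
        rw [Finset.card_erase_of_mem (Finset.mem_univ x), Finset.card_univ, hcard]
      have : S.card * (k - 1) = r * (k - 1) := by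
        rw [← h2, ← h1, hcover, h3, hr]
      exact Nat.eq_of_mul_eq_mul_right hk1 this
    -- hence the image of φ x on S misses some index m₀
    have hTcard : (S.image (φ x)).card = r := by
      rw [Finset.card_image_of_injOn, hScard]
      intro B₁ hB₁ B₂ hB₂ h
      exact hφ x ((hmemS B₁).1 hB₁) ((hmemS B₂).1 hB₂) h
    obtain ⟨m₀, hm₀⟩ : ∃ m₀, m₀ ∉ S.image (φ x) := by
      by_contra h
      push_neg at h
      have : (S.image (φ x)) = Finset.univ := Finset.eq_univ_iff_forall.2 h
      rw [this, Finset.card_univ, Fintype.card_fin] at hTcard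
      omega
    refine ⟨fun i => star (H x m₀ i), fun i h => ?_, fun B => ?_⟩
    · have := hHuni x m₀ i
      rw [star_eq_zero] at h
      rw [h] at this
      simp at this
    · by_cases hxB : x ∈ (B : Finset V)
      · have hφne : φ x (B : Finset V) ≠ m₀ := by
          intro h
          exact hm₀ (h ▸ Finset.mem_image_of_mem (φ x) ((hmemS _).2 ⟨B.2, hxB⟩))
        have horth : ∑ i, H x (φ x (B : Finset V)) i * star (H x m₀ i) = 0 := by
          have := congrArg (fun M => M (φ x (B : Finset V)) m₀) (hHorth x)
          simp only [Matrix.mul_apply, Matrix.conjTranspose_apply,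
            Matrix.smul_apply, Matrix.one_apply, if_neg hφne, smul_zero] at this
          exact this
        calc ∑ i, star (H x m₀ i) * F B (x, i)
            = (Real.sqrt (((k : ℝ) - 1) / ((v : ℝ) - 1)) : ℂ) *
              ∑ i, H x (φ x (B : Finset V)) i * star (H x m₀ i) := by
              rw [Finset.mul_sum]
              refine Finset.sum_congr rfl fun i _ => ?_
              rw [hF B (x, i)]
              simp only [if_pos hxB]
              ring
          _ = 0 := by rw [horth, mul_zero]
      · refine Finset.sum_eq_zero fun i _ => ?_
        rw [hF B (x, i)]
        simp [hxB]
  -- the vector g for a chosen x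
  have hV : Nonempty V := by
    rw [← Fintype.card_pos_iff, hcard]; omega
  obtain ⟨x⟩ := hV
  obtain ⟨c, hc0, hcF⟩ := key x
  set g : V × Fin (r + 1) → ℂ := fun p => if p.1 = x then c p.2 else 0 with hg
  have hgne : g ≠ 0 := by
    intro h
    have := congrFun h (x, 0)
    simp [hg] at this
    exact hc0 0 this
  have hsupp : ∃ s : Finset (V × Fin (r + 1)), s.card ≤ r + 1 ∧ ∀ p ∉ s, g p = 0 := by
    refine ⟨{x} ×ˢ Finset.univ, ?_, ?_⟩
    · simp
    · intro p hp
      simp only [Finset.mem_product, Finset.mem_singleton, Finset.mem_univ,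
        and_true] at hp
      simp [hg, hp]
  have hFg : F.mulVec g = 0 := by
    funext B
    simp only [Matrix.mulVec, dotProduct, Pi.zero_apply]
    rw [Fintype.sum_prod_type]
    rw [Finset.sum_eq_single x]
    · rw [← hcF B]
      refine Finset.sum_congr rfl fun i _ => ?_
      simp [hg, mul_comm]
    · intro a _ ha
      refine Finset.sum_eq_zero fun i _ => ?_
      simp [hg, ha]
    · intro h; exact absurd (Finset.mem_univ x) h
  refine ⟨?_, ⟨g, hgne, hsupp, hFg⟩, ?_⟩
  · intro y hli
    obtain ⟨cy, hcy0, hcyF⟩ := key y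
    rw [Fintype.linearIndependent_iff] at hli
    refine hcy0 0 (hli cy ?_ 0)
    funext B
    simp only [Finset.sum_apply, Pi.smul_apply, smul_eq_mul, Pi.zero_apply]
    exact hcyF B
  · intro δ hδ hRIP
    obtain ⟨hlow, _⟩ := hRIP g hsupp
    rw [hFg] at hlow
    simp only [Pi.zero_apply, norm_zero, ne_eq, OfNat.ofNat_ne_zero,
      not_false_eq_true, zero_pow, Finset.sum_const_zero] at hlow
    have hpos : 0 < ∑ j, ‖g j‖ ^ 2 := by
      have hne : g (x, 0) ≠ 0 := by
        simp only [hg]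
        simpa using hc0 0
      have h1 : 0 < ‖g (x, 0)‖ ^ 2 := pow_pos (norm_pos_iff.mpr hne) 2
      exact lt_of_lt_of_le h1 (Finset.single_le_sum
        (f := fun j => ‖g j‖ ^ 2) (fun j _ => by positivity) (Finset.mem_univ (x, 0)))
    nlinarith
end
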